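/- For all reals ε and p with 0 < ε < p² ≤ 1 there exists n₀ = n₀(ε,p) such that every (ε,p)-quasirandom graph G on n > n₀ vertices satisfies (1−3√ε)·(n/2)·log(pn) ≤ log NM(G,√ε) ≤ (1+3√ε)·(n/2)·log(pn). -/

import Mathlib

open Finset

/-- `M` (a finset of edges) is a matching of `G`: every element is an edge of `G` and distinct
elements of `M` share no endpoint. -/
def IsMatchingFinset {V : Type*} (G : SimpleGraph V) (M : Finset (Sym2 V)) : Prop :=
  (∀ e ∈ M, e ∈ G.edgeSet) ∧
    ∀ e ∈ M, ∀ f ∈ M, e ≠ f → ∀ v : V, ¬(v ∈ e ∧ v ∈ f)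

/-- `M` is a maximal matching of `G`: every edge of `G` shares an endpoint with some edge
of `M`. -/
def IsMaximalMatchingFinset {V : Type*} (G : SimpleGraph V) (M : Finset (Sym2 V)) : Prop :=
  IsMatchingFinset G M ∧ ∀ e ∈ G.edgeSet, ∃ f ∈ M, ∃ v : V, v ∈ e ∧ v ∈ f

/-- The number of vertices covered by the edges in `M`. -/
noncomputable def coveredCard {V : Type*} (M : Finset (Sym2 V)) : ℕ :=
  Set.ncard {v : V | ∃ e ∈ M, v ∈ e}

/-- `NM G ε` is the number of maximal `ε`-near perfect matchings of `G`, i.e. maximal matchings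
covering at least `(1-ε)|V(G)|` vertices. -/
noncomputable def NM (V : Type*) [Fintype V] (G : SimpleGraph V) (ε : ℝ) : ℕ :=
  Nat.card {M : Finset (Sym2 V) // IsMaximalMatchingFinset G M ∧
    (1 - ε) * (Fintype.card V : ℝ) ≤ (coveredCard M : ℝ)}

/-- `G` is `(ε,p)`-quasirandom: any two disjoint vertex sets of size at least `ε·|V(G)|`
have edge density within `ε` of `p` (strictly). -/
def IsQuasirandom {V : Type*} [Fintype V] [DecidableEq V]
    (G : SimpleGraph V) [DecidableRel G.Adj] (ε p : ℝ) : Prop :=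
  ∀ X Y : Finset V, Disjoint X Y →
    ε * (Fintype.card V : ℝ) ≤ (X.card : ℝ) → ε * (Fintype.card V : ℝ) ≤ (Y.card : ℝ) →
    |((G.edgeDensity X Y : ℚ) : ℝ) - p| < ε

set_option linter.unusedSectionVars false

lemma fact_le_fact_mul_pow (k : ℕ) : ∀ d : ℕ, Nat.factorial (k + d) ≤ Nat.factorial k * (k + d) ^ d := by
  intro d
  induction d with
  | zero => simp
  | succ d ih =>
    have h1 : Nat.factorial (k + (d+1)) = (k + d + 1) * Nat.factorial (k + d) := by
      rw [← Nat.add_assoc]; rfl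
    calc Nat.factorial (k + (d+1)) = (k + d + 1) * Nat.factorial (k + d) := h1
      _ ≤ (k + d + 1) * (Nat.factorial k * (k + d) ^ d) := Nat.mul_le_mul_left _ ih
      _ ≤ (k + d + 1) * (Nat.factorial k * (k + d + 1) ^ d) := by
          refine Nat.mul_le_mul_left _ (Nat.mul_le_mul_left _ (Nat.pow_le_pow_left ?_ d))
          omega
      _ = Nat.factorial k * (k + (d+1)) ^ (d+1) := by ring
lemma pow_le_factorial_mul_exp (k : ℕ) : (k : ℝ) ^ k ≤ Nat.factorial k * Real.exp k := by
  induction k with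
  | zero => simp [Real.exp_nonneg]
  | succ k ih =>
    rcases Nat.eq_zero_or_pos k with rfl | hk
    · simpa using Real.add_one_le_exp 1
    have hkR : (0:ℝ) < k := by exact_mod_cast hk
    have key : ((k:ℝ) + 1) ^ k ≤ (k:ℝ) ^ k * Real.exp 1 := by
      have h1 : (k:ℝ) + 1 = k * (1 + 1/k) := by field_simp
      have h2 : (1 + 1/(k:ℝ)) ^ k ≤ Real.exp 1 := by
        have := Real.add_one_le_exp (1/(k:ℝ))
        calc (1 + 1/(k:ℝ)) ^ k ≤ (Real.exp (1/k)) ^ k := by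
              apply pow_le_pow_left₀ (by positivity) (by linarith)
          _ = Real.exp 1 := by
              rw [← Real.exp_nat_mul]
              congr 1; field_simp
      calc ((k:ℝ) + 1) ^ k = (k:ℝ)^k * (1 + 1/k)^k := by rw [h1, mul_pow]
        _ ≤ (k:ℝ)^k * Real.exp 1 := by
            apply mul_le_mul_of_nonneg_left h2 (by positivity)
    have : ((k:ℝ) + 1) ^ (k+1) = ((k:ℝ)+1) * ((k:ℝ)+1)^k := by ring
    calc ((k+1:ℕ) : ℝ) ^ (k+1) = ((k:ℝ)+1) * ((k:ℝ)+1)^k := by push_cast; ring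
      _ ≤ ((k:ℝ)+1) * ((k:ℝ)^k * Real.exp 1) := by
          apply mul_le_mul_of_nonneg_left key (by positivity)
      _ ≤ ((k:ℝ)+1) * ((Nat.factorial k * Real.exp k) * Real.exp 1) := by
          apply mul_le_mul_of_nonneg_left (mul_le_mul_of_nonneg_right ih (Real.exp_nonneg 1))
            (by positivity)
      _ = (Nat.factorial (k+1) : ℝ) * Real.exp ((k+1 : ℕ)) := by
          rw [Nat.factorial_succ]
          push_cast
          rw [Real.exp_add]
          ring



noncomputable section Aux
open scoped Classical

variable {V : Type} [Fintype V] [DecidableEq V]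

/-- vertices covered by `M`, as a finset -/
def cov (M : Finset (Sym2 V)) : Finset V := Finset.univ.filter (fun v => ∃ e ∈ M, v ∈ e)

lemma coveredCard_eq_cov (M : Finset (Sym2 V)) : coveredCard M = (cov M).card := by
  rw [coveredCard, cov, Set.ncard_eq_toFinset_card']
  congr 1
  ext v
  simp

lemma cov_mono {M N : Finset (Sym2 V)} (h : M ⊆ N) : cov M ⊆ cov N := by
  intro v hv
  rw [cov, mem_filter] at hv ⊢
  obtain ⟨-, e, he, hve⟩ := hv
  exact ⟨mem_univ v, e, h he, hve⟩

lemma end_card (G : SimpleGraph V) {e : Sym2 V} (he : e ∈ G.edgeSet) :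
    (Finset.univ.filter (· ∈ e)).card = 2 := by
  induction e using Sym2.ind with
  | _ a b =>
    rw [SimpleGraph.mem_edgeSet] at he
    have h : (Finset.univ.filter (· ∈ s(a,b))) = {a, b} := by
      ext v; simp [Sym2.mem_iff]
    rw [h, card_pair he.ne]

lemma cov_card (G : SimpleGraph V) {M : Finset (Sym2 V)} (hM : IsMatchingFinset G M) :
    (cov M).card = 2 * M.card := by
  have h : cov M = M.biUnion (fun e => Finset.univ.filter (· ∈ e)) := by
    ext v; simp [cov]
  rw [h, card_biUnion]
  · rw [Finset.sum_congr rfl (fun e he => end_card G (hM.1 e he)), Finset.sum_const,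
      smul_eq_mul, Nat.mul_comm]
  · intro e he f hf hef
    rw [Function.onFun, Finset.disjoint_left]
    intro v hv hv'
    rw [mem_filter] at hv hv'
    exact hM.2 e he f hf hef v ⟨hv.2, hv'.2⟩

lemma matching_two_card_le (G : SimpleGraph V) {M : Finset (Sym2 V)}
    (hM : IsMatchingFinset G M) : 2 * M.card ≤ Fintype.card V := by
  rw [← cov_card G hM]
  exact (card_le_card (subset_univ _)).trans_eq (card_univ)



/-- the set of near-perfect maximal matchings, as a finset -/
def NMset (G : SimpleGraph V) (d : ℝ) : Finset (Finset (Sym2 V)) :=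
  Finset.univ.filter (fun M => IsMaximalMatchingFinset G M ∧
    (1 - d) * (Fintype.card V : ℝ) ≤ (coveredCard M : ℝ))

lemma NM_eq_card (G : SimpleGraph V) (d : ℝ) : NM V G d = (NMset G d).card := by
  rw [NM, Nat.card_eq_fintype_card, NMset, Fintype.card_subtype]

/-- matchings of size k -/
def Mk (G : SimpleGraph V) (k : ℕ) : Finset (Finset (Sym2 V)) :=
  Finset.univ.filter (fun M => IsMatchingFinset G M ∧ M.card = k)

lemma mem_Mk {G : SimpleGraph V} {k : ℕ} {M : Finset (Sym2 V)} :
    M ∈ Mk G k ↔ IsMatchingFinset G M ∧ M.card = k := by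
  rw [Mk, mem_filter]; simp

/-- edges that can extend the matching M -/
def extEdges (G : SimpleGraph V) [DecidableRel G.Adj] (M : Finset (Sym2 V)) : Finset (Sym2 V) :=
  G.edgeFinset.filter (fun e => ∀ f ∈ M, ∀ v : V, ¬(v ∈ e ∧ v ∈ f))

lemma mem_extEdges {G : SimpleGraph V} [DecidableRel G.Adj] {M : Finset (Sym2 V)}
    {e : Sym2 V} : e ∈ extEdges G M ↔
      e ∈ G.edgeSet ∧ ∀ f ∈ M, ∀ v : V, ¬(v ∈ e ∧ v ∈ f) := by
  rw [extEdges, mem_filter, SimpleGraph.mem_edgeFinset]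

lemma extEdges_not_mem {G : SimpleGraph V} [DecidableRel G.Adj] {M : Finset (Sym2 V)}
    {e : Sym2 V} (he : e ∈ extEdges G M) : e ∉ M := by
  intro heM
  rw [mem_extEdges] at he
  exact he.2 e heM e.out.1 ⟨Sym2.out_fst_mem e, Sym2.out_fst_mem e⟩

lemma insert_mem_Mk {G : SimpleGraph V} [DecidableRel G.Adj] {M : Finset (Sym2 V)} {k : ℕ}
    (hM : M ∈ Mk G k) {e : Sym2 V} (he : e ∈ extEdges G M) : insert e M ∈ Mk G (k + 1) := by
  have heM : e ∉ M := extEdges_not_mem he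
  rw [mem_Mk] at hM ⊢
  rw [mem_extEdges] at he
  constructor
  · constructor
    · intro f hf
      rcases Finset.mem_insert.mp hf with rfl | hf
      · exact he.1
      · exact hM.1.1 f hf
    · intro f hf g hg hfg v hv
      rcases Finset.mem_insert.mp hf with rfl | hf'
      · rcases Finset.mem_insert.mp hg with rfl | hg'
        · exact hfg rfl
        · exact he.2 g hg' v hv
      · rcases Finset.mem_insert.mp hg with rfl | hg'
        · exact he.2 f hf' v ⟨hv.2, hv.1⟩
        · exact hM.1.2 f hf' g hg' hfg v hv
  · rw [Finset.card_insert_of_notMem heM, hM.2]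

lemma erase_mem_Mk {G : SimpleGraph V} {M' : Finset (Sym2 V)} {k : ℕ}
    (hM' : M' ∈ Mk G (k + 1)) {e : Sym2 V} (he : e ∈ M') : M'.erase e ∈ Mk G k := by
  rw [mem_Mk] at hM' ⊢
  refine ⟨⟨fun f hf => hM'.1.1 f (Finset.erase_subset _ _ hf),
    fun f hf g hg => hM'.1.2 f (Finset.erase_subset _ _ hf) g (Finset.erase_subset _ _ hg)⟩, ?_⟩
  rw [Finset.card_erase_of_mem he, hM'.2]
  omega

lemma mem_extEdges_erase {G : SimpleGraph V} [DecidableRel G.Adj] {M' : Finset (Sym2 V)} {k : ℕ}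
    (hM' : M' ∈ Mk G (k + 1)) {e : Sym2 V} (he : e ∈ M') : e ∈ extEdges G (M'.erase e) := by
  rw [mem_Mk] at hM'
  rw [mem_extEdges]
  refine ⟨hM'.1.1 e he, fun f hf v hv => ?_⟩
  rw [Finset.mem_erase] at hf
  exact hM'.1.2 e he f hf.2 (Ne.symm hf.1) v hv

/-- the key double count -/
lemma double_count (G : SimpleGraph V) [DecidableRel G.Adj] (k : ℕ) :
    ∑ M ∈ Mk G k, (extEdges G M).card = (Mk G (k + 1)).card * (k + 1) := by
  classical
  -- T : pairs (M', e) with M' ∈ Mk (k+1), e ∈ M'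
  set T : Finset ((_ : Finset (Sym2 V)) × Sym2 V) :=
    (Mk G (k + 1)).sigma (fun M' => M') with hT
  have h1 : T.card = (Mk G (k + 1)).card * (k + 1) := by
    rw [hT, Finset.card_sigma]
    rw [Finset.sum_congr rfl (fun M' hM' => (mem_Mk.mp hM').2), Finset.sum_const, smul_eq_mul]
  have h2 : T.card = ∑ M ∈ Mk G k, (extEdges G M).card := by
    rw [Finset.card_eq_sum_card_fiberwise
      (f := fun p => p.1.erase p.2) (t := Mk G k) ?_]
    · refine Finset.sum_congr rfl (fun M hM => ?_)
      refine Finset.card_bij (fun p _ => p.2) ?_ ?_ ?_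
      · rintro ⟨M', e⟩ hp
        rw [Finset.mem_filter, hT, Finset.mem_sigma] at hp
        obtain ⟨⟨hM', he⟩, hMe⟩ := hp
        have := mem_extEdges_erase hM' he
        rwa [hMe] at this
      · rintro ⟨M', e⟩ hp ⟨M'', f⟩ hq h
        simp only at h
        subst h
        rw [Finset.mem_filter, hT, Finset.mem_sigma] at hp hq
        obtain ⟨⟨-, he⟩, hMe⟩ := hp
        obtain ⟨⟨-, hf⟩, hMf⟩ := hq
        simp only at he hf hMe hMf
        have : M' = M'' := by
          rw [← Finset.insert_erase he, hMe, ← Finset.insert_erase hf, hMf]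
        subst this
        rfl
      · intro e he
        refine ⟨⟨insert e M, e⟩, ?_, rfl⟩
        rw [Finset.mem_filter, hT, Finset.mem_sigma]
        have hins := insert_mem_Mk hM he
        exact ⟨⟨hins, Finset.mem_insert_self e M⟩,
          Finset.erase_insert (extEdges_not_mem he)⟩
    · rintro ⟨M', e⟩ hp
      rw [hT, Finset.mem_coe, Finset.mem_sigma] at hp
      exact erase_mem_Mk hp.1 hp.2
  omega

lemma exists_maximal_ext (G : SimpleGraph V) {M : Finset (Sym2 V)}
    (hM : IsMatchingFinset G M) : ∃ N, M ⊆ N ∧ IsMaximalMatchingFinset G N := by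
  set S : Finset (Finset (Sym2 V)) :=
    Finset.univ.filter (fun N => IsMatchingFinset G N ∧ M ⊆ N) with hS
  have hMS : M ∈ S := by rw [hS, mem_filter]; exact ⟨mem_univ _, hM, Finset.Subset.refl M⟩
  obtain ⟨N, hN, hNmax⟩ := Finset.exists_max_image S (fun N => N.card) ⟨M, hMS⟩
  rw [hS, mem_filter] at hN
  refine ⟨N, hN.2.2, hN.2.1, ?_⟩
  by_contra hcon
  push_neg at hcon
  obtain ⟨e, he, hsep⟩ := hcon
  have heN : e ∉ N := fun heN => hsep e heN e.out.1 (Sym2.out_fst_mem e) (Sym2.out_fst_mem e)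
  have hins : insert e N ∈ S := by
    rw [hS, mem_filter]
    refine ⟨mem_univ _, ⟨?_, ?_⟩, hN.2.2.trans (Finset.subset_insert e N)⟩
    · intro f hf
      rcases Finset.mem_insert.mp hf with rfl | hf
      · exact he
      · exact hN.2.1.1 f hf
    · intro f hf g hg hfg v hv
      rcases Finset.mem_insert.mp hf with rfl | hf'
      · rcases Finset.mem_insert.mp hg with rfl | hg'
        · exact hfg rfl
        · exact hsep g hg' v hv.1 hv.2
      · rcases Finset.mem_insert.mp hg with rfl | hg'
        · exact hsep f hf' v hv.2 hv.1
        · exact hN.2.1.2 f hf' g hg' hfg v hv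
  have := hNmax _ hins
  rw [Finset.card_insert_of_notMem heN] at this
  omega


lemma edges_inside_card (G : SimpleGraph V) [DecidableRel G.Adj] {ε p : ℝ}
    (hq : IsQuasirandom G ε p) (hε : 0 < ε) (hδ3 : 3 * Real.sqrt ε ≤ 1)
    (hn3 : 3 ≤ Real.sqrt ε * (Fintype.card V : ℝ))
    (U : Finset V) (hU : Real.sqrt ε * (Fintype.card V : ℝ) ≤ (U.card : ℝ)) :
    (p - ε) * (Real.sqrt ε * (Fintype.card V : ℝ) / 3) ^ 2 ≤
      ((G.edgeFinset.filter (fun e => ∀ v ∈ e, v ∈ U)).card : ℝ) := by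
  set n : ℝ := (Fintype.card V : ℝ) with hn
  set δ : ℝ := Real.sqrt ε with hδ
  have hδpos : 0 < δ := Real.sqrt_pos.mpr hε
  have hεδ : ε = δ ^ 2 := (Real.sq_sqrt hε.le).symm
  have hnpos : 0 < n := by nlinarith
  -- choose the two halves
  set t : ℕ := U.card / 2 with ht
  obtain ⟨X, hXU, hXcard⟩ := Finset.exists_subset_card_eq (s := U) (n := t) (Nat.div_le_self _ _)
  set Y : Finset V := U \ X with hY
  have hYcard : Y.card = U.card - t := by rw [hY, Finset.card_sdiff_of_subset hXU, hXcard]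
  have htR : ((U.card : ℝ) - 1) / 2 ≤ (t : ℝ) := by
    have h : U.card ≤ 2 * t + 1 := by omega
    have h2 := (Nat.cast_le (α := ℝ)).mpr h
    push_cast at h2
    linarith
  have hXR : δ * n / 3 ≤ (X.card : ℝ) := by
    rw [hXcard]
    have : δ * n / 3 ≤ (δ * n - 1) / 2 := by linarith
    linarith [htR, hU]
  have hYR : δ * n / 3 ≤ (Y.card : ℝ) := by
    have h1 : t ≤ U.card - t := by omega
    have h2 : (t:ℝ) ≤ (Y.card : ℝ) := by
      rw [hYcard]; exact_mod_cast (Nat.cast_le (α := ℝ)).mpr h1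
    calc δ * n / 3 ≤ (X.card : ℝ) := hXR
      _ = (t : ℝ) := by rw [hXcard]
      _ ≤ _ := h2
  have hεX : ε * n ≤ (X.card : ℝ) := by
    refine le_trans ?_ hXR
    rw [hεδ]
    nlinarith
  have hεY : ε * n ≤ (Y.card : ℝ) := by
    refine le_trans ?_ hYR
    rw [hεδ]
    nlinarith
  have hdisj : Disjoint X Y := Finset.disjoint_sdiff
  have happ := hq X Y hdisj hεX hεY
  set d : ℝ := ((G.edgeDensity X Y : ℚ) : ℝ) with hd
  have hpd : p - ε < d := by
    rw [abs_lt] at happ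
    linarith [happ.1]
  have hd0 : 0 ≤ d := by
    rw [hd]
    exact_mod_cast G.edgeDensity_nonneg X Y
  have hX0 : (0:ℝ) < X.card := lt_of_lt_of_le (by positivity) hXR
  have hY0 : (0:ℝ) < Y.card := lt_of_lt_of_le (by positivity) hYR
  have hcard : ((G.interedges X Y).card : ℝ) = d * ((X.card : ℝ) * (Y.card : ℝ)) := by
    have hq1 : ((G.interedges X Y).card : ℚ) = G.edgeDensity X Y * ((X.card : ℚ) * (Y.card : ℚ)) := by
      rw [SimpleGraph.edgeDensity_def]
      have hX0' : (X.card : ℚ) ≠ 0 := by exact_mod_cast ne_of_gt (by exact_mod_cast hX0)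
      have hY0' : (Y.card : ℚ) ≠ 0 := by exact_mod_cast ne_of_gt (by exact_mod_cast hY0)
      rw [div_mul_cancel₀ _ (mul_ne_zero hX0' hY0')]
    rw [hd]
    exact_mod_cast hq1
  -- injection from interedges into edges inside U
  have hinj : (G.interedges X Y).card ≤
      (G.edgeFinset.filter (fun e => ∀ v ∈ e, v ∈ U)).card := by
    apply Finset.card_le_card_of_injOn (fun pr => s(pr.1, pr.2))
    · rintro ⟨a, b⟩ hab
      rw [Finset.mem_coe, SimpleGraph.mem_interedges_iff] at hab
      obtain ⟨ha, hb, hadj⟩ := hab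
      rw [Finset.mem_coe, Finset.mem_filter, SimpleGraph.mem_edgeFinset, SimpleGraph.mem_edgeSet]
      refine ⟨hadj, fun v hv => ?_⟩
      rcases Sym2.mem_iff.mp hv with rfl | rfl
      · exact hXU ha
      · exact Finset.sdiff_subset hb
    · rintro ⟨a, b⟩ hab ⟨a', b'⟩ hab' heq
      rw [Finset.mem_coe, SimpleGraph.mem_interedges_iff] at hab hab'
      obtain ⟨ha, hb, -⟩ := hab
      obtain ⟨ha', hb', -⟩ := hab'
      simp only [Sym2.eq_iff] at heq
      rcases heq with ⟨rfl, rfl⟩ | ⟨rfl, rfl⟩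
      · rfl
      · exact absurd hb' (Finset.disjoint_left.mp hdisj ha)
  -- combine
  have hsq : (δ * n / 3) ^ 2 ≤ (X.card : ℝ) * (Y.card : ℝ) := by
    have h0 : (0:ℝ) ≤ δ * n / 3 := by positivity
    calc (δ * n / 3) ^ 2 = (δ * n / 3) * (δ * n / 3) := sq (δ * n / 3)
      _ ≤ (X.card : ℝ) * (Y.card : ℝ) := mul_le_mul hXR hYR h0 (le_trans h0 hXR)
  rcases le_or_gt (p - ε) 0 with hple | hpgt
  · have : (p - ε) * (δ * n / 3) ^ 2 ≤ 0 := mul_nonpos_of_nonpos_of_nonneg hple (by positivity)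
    exact le_trans this (Nat.cast_nonneg _)
  · calc (p - ε) * (δ * n / 3) ^ 2 ≤ d * ((X.card : ℝ) * (Y.card : ℝ)) :=
        mul_le_mul hpd.le hsq (by positivity) hd0
      _ = ((G.interedges X Y).card : ℝ) := hcard.symm
      _ ≤ _ := by exact_mod_cast hinj

lemma extEdges_superset {G : SimpleGraph V} [DecidableRel G.Adj] {M : Finset (Sym2 V)} :
    G.edgeFinset.filter (fun e => ∀ v ∈ e, v ∈ (Finset.univ \ cov M)) ⊆ extEdges G M := by
  intro e he
  rw [Finset.mem_filter] at he
  rw [mem_extEdges]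
  refine ⟨SimpleGraph.mem_edgeFinset.mp he.1, fun f hf v hv => ?_⟩
  have h1 := he.2 v hv.1
  rw [Finset.mem_sdiff] at h1
  apply h1.2
  rw [cov, Finset.mem_filter]
  exact ⟨Finset.mem_univ v, f, hf, hv.2⟩

lemma uncov_card {G : SimpleGraph V} {M : Finset (Sym2 V)} {k : ℕ} (hM : M ∈ Mk G k) :
    (Finset.univ \ cov M).card = Fintype.card V - 2 * k := by
  rw [Finset.card_sdiff_of_subset (Finset.subset_univ _), Finset.card_univ,
    cov_card G (mem_Mk.mp hM).1, (mem_Mk.mp hM).2]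

/-- The recursion: many matchings of each size. -/
lemma Mk_card_lower (G : SimpleGraph V) [DecidableRel G.Adj] {q : ℝ} (hq0 : 0 ≤ q) (m : ℕ)
    (hext : ∀ k < m, ∀ M ∈ Mk G k, q ≤ ((extEdges G M).card : ℝ)) :
    ∀ k ≤ m, q ^ k ≤ ((Mk G k).card : ℝ) * (Nat.factorial k : ℝ) := by
  intro k
  induction k with
  | zero =>
    intro _
    have h0 : (∅ : Finset (Sym2 V)) ∈ Mk G 0 := by
      rw [mem_Mk]
      exact ⟨⟨fun e he => absurd he (Finset.notMem_empty e),
        fun e he => absurd he (Finset.notMem_empty e)⟩, Finset.card_empty⟩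
    have h1 : 1 ≤ (Mk G 0).card := Finset.card_pos.mpr ⟨∅, h0⟩
    simp only [pow_zero, Nat.factorial_zero, Nat.cast_one, mul_one]
    exact_mod_cast h1
  | succ k ih =>
    intro hk1
    have hk : k < m := by omega
    have ihk := ih (by omega)
    -- card * q ≤ sum of ext cards = (k+1) * card (Mk (k+1))
    have hsum : ((Mk G k).card : ℝ) * q ≤ ((Mk G (k+1)).card : ℝ) * ((k:ℝ) + 1) := by
      have h1 : ((Mk G k).card) • q ≤ ∑ M ∈ Mk G k, ((extEdges G M).card : ℝ) :=
        Finset.card_nsmul_le_sum _ _ _ (fun M hM => hext k hk M hM)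
      rw [nsmul_eq_mul] at h1
      have h2 : ∑ M ∈ Mk G k, ((extEdges G M).card : ℝ) =
          ((Mk G (k+1)).card : ℝ) * ((k:ℝ) + 1) := by
        rw [← Nat.cast_sum]
        rw [double_count G k]
        push_cast
        ring
      linarith [h1, h2.le, h2.ge]
    have hfact : (0:ℝ) ≤ (Nat.factorial k : ℝ) := by positivity
    calc q ^ (k+1) = q ^ k * q := by ring
      _ ≤ (((Mk G k).card : ℝ) * (Nat.factorial k : ℝ)) * q := by
          exact mul_le_mul_of_nonneg_right ihk hq0
      _ = (((Mk G k).card : ℝ) * q) * (Nat.factorial k : ℝ) := by ring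
      _ ≤ (((Mk G (k+1)).card : ℝ) * ((k:ℝ) + 1)) * (Nat.factorial k : ℝ) :=
          mul_le_mul_of_nonneg_right hsum hfact
      _ = ((Mk G (k+1)).card : ℝ) * (Nat.factorial (k+1) : ℝ) := by
          rw [Nat.factorial_succ]
          push_cast
          ring

/-- Each matching extends to a maximal one; fibers are small. -/
lemma Mk_le_NMset (G : SimpleGraph V) [DecidableRel G.Adj] {d : ℝ} (m : ℕ)
    (hcover : (1 - d) * (Fintype.card V : ℝ) ≤ 2 * (m : ℝ)) :
    (Mk G m).card ≤ 2 ^ (Fintype.card V) * (NMset G d).card := by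
  classical
  set f : Finset (Sym2 V) → Finset (Sym2 V) := fun M =>
    if h : IsMatchingFinset G M then (exists_maximal_ext G h).choose else ∅ with hf
  have hfspec : ∀ M, IsMatchingFinset G M → M ⊆ f M ∧ IsMaximalMatchingFinset G (f M) := by
    intro M h
    rw [hf]
    simp only [dif_pos h]
    exact (exists_maximal_ext G h).choose_spec
  have himg : ∀ M ∈ Mk G m, f M ∈ NMset G d := by
    intro M hM
    rw [mem_Mk] at hM
    obtain ⟨hsub, hmax⟩ := hfspec M hM.1
    rw [NMset, Finset.mem_filter]
    refine ⟨Finset.mem_univ _, hmax, ?_⟩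
    calc (1 - d) * (Fintype.card V : ℝ) ≤ 2 * (m : ℝ) := hcover
      _ = ((2 * m : ℕ) : ℝ) := by push_cast; ring
      _ ≤ (coveredCard (f M) : ℝ) := by
          have h1 : 2 * m = (cov M).card := by rw [cov_card G hM.1, hM.2]
          have h2 : (cov M).card ≤ (cov (f M)).card := Finset.card_le_card (cov_mono hsub)
          rw [coveredCard_eq_cov]
          exact_mod_cast h1 ▸ h2
  calc (Mk G m).card ≤ 2 ^ (Fintype.card V) * ((Mk G m).image f).card := by
        apply Finset.card_le_mul_card_image
        intro N hN
        -- fiber over N is contained in powerset of N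
        have hfib : (Mk G m).filter (fun M => f M = N) ⊆ N.powerset := by
          intro M hM
          rw [Finset.mem_filter] at hM
          rw [Finset.mem_powerset]
          have := (hfspec M (mem_Mk.mp hM.1).1).1
          rwa [hM.2] at this
        calc ((Mk G m).filter (fun M => f M = N)).card ≤ N.powerset.card :=
              Finset.card_le_card hfib
          _ = 2 ^ N.card := Finset.card_powerset N
          _ ≤ 2 ^ (Fintype.card V) := by
              apply Nat.pow_le_pow_right (by norm_num)
              obtain ⟨M0, hM0⟩ := Finset.mem_image.mp hN
              have hNmax : IsMaximalMatchingFinset G N := by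
                rw [← hM0.2]
                exact (hfspec M0 (mem_Mk.mp hM0.1).1).2
              have := matching_two_card_le G hNmax.1
              omega
    _ ≤ 2 ^ (Fintype.card V) * (NMset G d).card := by
        apply Nat.mul_le_mul_left
        apply Finset.card_le_card
        intro N hN
        obtain ⟨M0, hM0, rfl⟩ := Finset.mem_image.mp hN
        exact himg M0 hM0
set_option maxHeartbeats 1000000 in
/-- Lower bound, main branch. -/
lemma lower_bound_main (G : SimpleGraph V) [DecidableRel G.Adj] {ε p : ℝ}
    (hq : IsQuasirandom G ε p) (hε : 0 < ε) (hp1 : p ^ 2 ≤ 1)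
    (h3δ : 3 * Real.sqrt ε < 1) (hδp : Real.sqrt ε < p)
    (hn3 : 3 ≤ Real.sqrt ε * (Fintype.card V : ℝ))
    (hlog : (|Real.log (p - ε)| + 2 * |Real.log (Real.sqrt ε / 3)| + Real.log 2) / Real.sqrt ε
      ≤ Real.log (Fintype.card V : ℝ)) :
    (1 - 3 * Real.sqrt ε) * ((Fintype.card V : ℝ) / 2) * Real.log (p * (Fintype.card V : ℝ))
      ≤ Real.log (NM V G (Real.sqrt ε)) := by
  classical
  set N : ℕ := Fintype.card V with hN
  set n : ℝ := (N : ℝ) with hnR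
  set δ : ℝ := Real.sqrt ε with hδ
  have hδpos : 0 < δ := Real.sqrt_pos.mpr hε
  have hδ13 : δ < 1 / 3 := by linarith
  have hεδ : ε = δ ^ 2 := (Real.sq_sqrt hε.le).symm
  have hεδ' : ε ≤ δ := by nlinarith
  have hppos : 0 < p := lt_trans hδpos hδp
  have hpε : 0 < p - ε := by linarith
  have hp_le : p ≤ 1 := by nlinarith
  have hnpos : (0:ℝ) < n := by nlinarith
  have hn3' : (3:ℝ) ≤ n := by nlinarith
  have hlogn0 : 0 ≤ Real.log n := Real.log_nonneg (by linarith)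
  -- the target size
  set m : ℕ := ⌈(1 - δ) * n / 2⌉₊ with hm
  have hmem : (0:ℝ) ≤ (1 - δ) * n / 2 := by nlinarith
  have hm_low : (1 - δ) * n / 2 ≤ (m : ℝ) := Nat.le_ceil _
  have hm_up : (m : ℝ) < (1 - δ) * n / 2 + 1 := Nat.ceil_lt_add_one hmem
  have h2mR : 2 * (m : ℝ) < n := by nlinarith
  have h2m : 2 * m ≤ N := by
    have h : ((2 * m : ℕ) : ℝ) < n := by push_cast; linarith
    rw [hnR] at h
    exact_mod_cast h.le
  have hm1 : 1 ≤ m := by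
    rcases Nat.eq_zero_or_pos m with h0 | h; swap; · exact h
    rw [h0] at hm_low
    simp at hm_low
    nlinarith
  have hmn : (m : ℝ) ≤ n := by linarith
  -- the per-step edge count
  set q : ℝ := (p - ε) * (δ * n / 3) ^ 2 with hqdef
  have hq0 : 0 < q := by
    apply mul_pos hpε
    positivity
  have hext : ∀ k < m, ∀ M ∈ Mk G k, q ≤ ((extEdges G M).card : ℝ) := by
    intro k hk M hM
    have hucard : (Finset.univ \ cov M).card = N - 2 * k := uncov_card hM
    have hUcast : ((Finset.univ \ cov M).card : ℝ) = n - 2 * k := by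
      rw [hucard]
      have h2k : 2 * k ≤ N := by omega
      push_cast [h2k]
      ring
    have hUge : δ * n ≤ ((Finset.univ \ cov M).card : ℝ) := by
      rw [hUcast]
      have hkm : (k : ℝ) ≤ (m : ℝ) - 1 := by
        have : k + 1 ≤ m := hk
        have := (Nat.cast_le (α := ℝ)).mpr this
        push_cast at this
        linarith
      linarith
    have h1 := edges_inside_card G hq hε (le_of_lt h3δ) hn3 (Finset.univ \ cov M) hUge
    calc q ≤ ((G.edgeFinset.filter (fun e => ∀ v ∈ e, v ∈ (Finset.univ \ cov M))).card : ℝ) := h1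
      _ ≤ ((extEdges G M).card : ℝ) := by
          exact_mod_cast Finset.card_le_card extEdges_superset
  have hrec := Mk_card_lower G hq0.le m hext m le_rfl
  have hcover : (1 - δ) * n ≤ 2 * (m : ℝ) := by linarith
  have hfib := Mk_le_NMset G m hcover (d := δ)
  rw [← NM_eq_card] at hfib
  -- q^m ≤ NM * m! * 2^N
  have hkey : q ^ m ≤ (NM V G δ : ℝ) * (Nat.factorial m : ℝ) * (2 : ℝ) ^ N := by
    have h1 : ((Mk G m).card : ℝ) ≤ 2 ^ N * (NM V G δ : ℝ) := by exact_mod_cast hfib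
    have h2 : (0:ℝ) ≤ (Nat.factorial m : ℝ) := by positivity
    calc q ^ m ≤ ((Mk G m).card : ℝ) * (Nat.factorial m : ℝ) := hrec
      _ ≤ (2 ^ N * (NM V G δ : ℝ)) * (Nat.factorial m : ℝ) := mul_le_mul_of_nonneg_right h1 h2
      _ = (NM V G δ : ℝ) * (Nat.factorial m : ℝ) * (2 : ℝ) ^ N := by ring
  have hNM1 : 1 ≤ NM V G δ := by
    by_contra hcon
    have h0 : NM V G δ = 0 := by omega
    rw [h0] at hkey
    simp at hkey
    nlinarith [pow_pos hq0 m]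
  have hNMpos : (0:ℝ) < (NM V G δ : ℝ) := by exact_mod_cast hNM1
  -- take logs
  have hlogkey : (m : ℝ) * Real.log q ≤
      Real.log (NM V G δ) + Real.log (Nat.factorial m) + (N : ℝ) * Real.log 2 := by
    have hfa : (0:ℝ) < (Nat.factorial m : ℝ) := by positivity
    have h2N : (0:ℝ) < (2:ℝ) ^ N := by positivity
    have h1 : Real.log (q ^ m) ≤
        Real.log ((NM V G δ : ℝ) * (Nat.factorial m : ℝ) * (2:ℝ) ^ N) :=
      Real.log_le_log (by positivity) hkey
    rw [Real.log_pow] at h1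
    have h2 : Real.log ((NM V G δ : ℝ) * (Nat.factorial m : ℝ) * (2:ℝ) ^ N)
        = Real.log (NM V G δ) + Real.log (Nat.factorial m) + (N : ℝ) * Real.log 2 := by
      rw [Real.log_mul (by positivity) (by positivity),
        Real.log_mul (by positivity) (by positivity), Real.log_pow]
    rw [h2] at h1
    push_cast at h1 ⊢
    linarith
  -- bound log m!
  have hlogfact : Real.log (Nat.factorial m) ≤ (m : ℝ) * Real.log n := by
    calc Real.log (Nat.factorial m) ≤ Real.log ((m : ℝ) ^ m) := by
          apply Real.log_le_log (by positivity)
          exact_mod_cast Nat.factorial_le_pow m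
      _ = (m : ℝ) * Real.log m := Real.log_pow m m
      _ ≤ (m : ℝ) * Real.log n := by
          apply mul_le_mul_of_nonneg_left _ (by positivity)
          apply Real.log_le_log (by exact_mod_cast hm1) hmn
  -- expand log q
  have hlogq : Real.log q = Real.log (p - ε) + 2 * (Real.log (δ / 3) + Real.log n) := by
    rw [hqdef]
    rw [Real.log_mul (ne_of_gt hpε) (by positivity), Real.log_pow]
    have : δ * n / 3 = (δ / 3) * n := by ring
    rw [this, Real.log_mul (by positivity) (ne_of_gt hnpos)]
    push_cast
    ring
  set L : ℝ := |Real.log (p - ε)| + 2 * |Real.log (δ / 3)| with hL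
  have hL0 : 0 ≤ L := by positivity
  have hlogq_ge : Real.log q ≥ 2 * Real.log n - L := by
    rw [hlogq, hL]
    have h1 : Real.log (p - ε) ≥ -|Real.log (p - ε)| := neg_abs_le _
    have h2 : Real.log (δ / 3) ≥ -|Real.log (δ / 3)| := neg_abs_le _
    linarith
  -- putting it together
  have hmain : Real.log (NM V G δ) ≥ (m : ℝ) * Real.log n - (m : ℝ) * L - n * Real.log 2 := by
    have h1 : (m : ℝ) * Real.log q ≥ (m : ℝ) * (2 * Real.log n - L) :=
      mul_le_mul_of_nonneg_left hlogq_ge (by positivity)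
    have h2 : (N : ℝ) = n := by rw [hnR]
    nlinarith [hlogkey, hlogfact]
  have hmL : (m : ℝ) * L ≤ n * L := mul_le_mul_of_nonneg_right hmn hL0
  have hmlogn : (1 - δ) * (n / 2) * Real.log n ≤ (m : ℝ) * Real.log n := by
    apply mul_le_mul_of_nonneg_right _ hlogn0
    linarith
  have hδlog : L + Real.log 2 ≤ δ * Real.log n := by
    rw [div_le_iff₀ hδpos] at hlog
    calc L + Real.log 2 ≤ (|Real.log (p - ε)| + 2 * |Real.log (δ / 3)| + Real.log 2) := by
          rw [hL]
      _ ≤ Real.log n * δ := hlog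
      _ = δ * Real.log n := by ring
  have hfinal1 : (1 - 3 * δ) * (n / 2) * Real.log n ≤ Real.log (NM V G δ) := by
    have hδn : δ * n * Real.log n ≥ n * (L + Real.log 2) := by
      have := mul_le_mul_of_nonneg_left hδlog hnpos.le
      nlinarith
    nlinarith [hmain, hmL, hmlogn]
  -- compare log (p * n) with log n
  have hlogpn : Real.log (p * n) = Real.log p + Real.log n :=
    Real.log_mul (ne_of_gt hppos) (ne_of_gt hnpos)
  have hlogp0 : Real.log p ≤ 0 := Real.log_nonpos hppos.le hp_le
  have h13δ : (0:ℝ) ≤ 1 - 3 * δ := by linarith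
  calc (1 - 3 * δ) * (n / 2) * Real.log (p * n)
      = (1 - 3 * δ) * (n / 2) * (Real.log p + Real.log n) := by rw [hlogpn]
    _ ≤ (1 - 3 * δ) * (n / 2) * Real.log n := by
        apply mul_le_mul_of_nonneg_left _ (by positivity)
        linarith
    _ ≤ Real.log (NM V G δ) := hfinal1
/-- counting bound: few matchings overall -/
lemma NM_count_upper (G : SimpleGraph V) [DecidableRel G.Adj] (d : ℝ) :
    NM V G d ≤ ∑ k ∈ Finset.range (Fintype.card V / 2 + 1),
      ((Fintype.card V)^2).choose k := by
  classical
  rw [NM_eq_card]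
  set K : ℕ := Fintype.card V / 2 with hK
  have hsub : NMset G d ⊆ (Finset.range (K + 1)).biUnion
      (fun k => G.edgeFinset.powersetCard k) := by
    intro M hM
    rw [NMset, Finset.mem_filter] at hM
    obtain ⟨-, hmax, -⟩ := hM
    have hcard : 2 * M.card ≤ Fintype.card V := matching_two_card_le G hmax.1
    rw [Finset.mem_biUnion]
    refine ⟨M.card, ?_, ?_⟩
    · rw [Finset.mem_range]; omega
    · rw [Finset.mem_powersetCard]
      exact ⟨fun e he => SimpleGraph.mem_edgeFinset.mpr (hmax.1.1 e he), rfl⟩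
  calc (NMset G d).card ≤ _ := Finset.card_le_card hsub
    _ ≤ ∑ k ∈ Finset.range (K + 1), (G.edgeFinset.powersetCard k).card :=
        Finset.card_biUnion_le
    _ ≤ ∑ k ∈ Finset.range (K + 1), ((Fintype.card V)^2).choose k := by
        apply Finset.sum_le_sum
        intro k _
        rw [Finset.card_powersetCard]
        apply Nat.choose_le_choose
        calc G.edgeFinset.card ≤ (Fintype.card V).choose 2 :=
              SimpleGraph.card_edgeFinset_le_card_choose_two
          _ ≤ (Fintype.card V) ^ 2 := Nat.choose_le_pow _ _

/-- real form of the counting bound -/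
lemma NM_count_upper_real (G : SimpleGraph V) [DecidableRel G.Adj] (d : ℝ)
    (hN : 1 ≤ Fintype.card V) :
    (NM V G d : ℝ) ≤ ((Fintype.card V / 2 : ℕ) + 1) *
      ((Fintype.card V : ℝ)^2) ^ (Fintype.card V / 2 : ℕ) /
        (Nat.factorial (Fintype.card V / 2 : ℕ)) := by
  classical
  set N : ℕ := Fintype.card V with hN'
  set K : ℕ := N / 2 with hK
  have hKN : K ≤ N ^ 2 := by
    have : K ≤ N := Nat.div_le_self _ _
    nlinarith [this, hN]
  have hterm : ∀ k ∈ Finset.range (K + 1),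
      (((N^2).choose k : ℝ)) ≤ ((N:ℝ)^2)^K / (Nat.factorial K) := by
    intro k hk
    rw [Finset.mem_range] at hk
    have hkK : k ≤ K := by omega
    have h1 : ((N^2).choose k : ℝ) ≤ ((N:ℝ)^2)^k / (Nat.factorial k) := by
      have h := Nat.choose_le_pow_div (α := ℝ) k (N^2)
      push_cast at h ⊢
      exact h
    refine h1.trans ?_
    rw [div_le_div_iff₀ (by positivity) (by positivity)]
    -- (N²)^k * K! ≤ (N²)^K * k!
    have hnat : (N^2)^k * Nat.factorial K ≤ (N^2)^K * Nat.factorial k := by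
      obtain ⟨e, he⟩ : ∃ e, K = k + e := ⟨K - k, by omega⟩
      rw [he]
      calc (N^2)^k * Nat.factorial (k + e)
          ≤ (N^2)^k * (Nat.factorial k * (k + e) ^ e) :=
            Nat.mul_le_mul_left _ (fact_le_fact_mul_pow k e)
        _ ≤ (N^2)^k * (Nat.factorial k * (N^2) ^ e) := by
            apply Nat.mul_le_mul_left
            apply Nat.mul_le_mul_left
            apply Nat.pow_le_pow_left
            rw [← he]
            exact hKN
        _ = (N^2)^(k+e) * Nat.factorial k := by rw [pow_add]; ring
    exact_mod_cast hnat
  calc (NM V G d : ℝ) ≤ ((∑ k ∈ Finset.range (K + 1), (N^2).choose k : ℕ) : ℝ) := by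
        exact_mod_cast NM_count_upper G d
    _ = ∑ k ∈ Finset.range (K + 1), (((N^2).choose k : ℝ)) := by push_cast; rfl
    _ ≤ ∑ k ∈ Finset.range (K + 1), ((N:ℝ)^2)^K / (Nat.factorial K) :=
        Finset.sum_le_sum hterm
    _ = ((K:ℝ) + 1) * ((N:ℝ)^2)^K / (Nat.factorial K) := by
        rw [Finset.sum_const, Finset.card_range]
        push_cast
        ring
set_option maxHeartbeats 1000000 in
/-- Upper bound, log form. -/
lemma upper_bound_main (G : SimpleGraph V) [DecidableRel G.Adj] {ε p : ℝ}
    (hε : 0 < ε) (hεp : ε < p ^ 2) (hp1 : p ^ 2 ≤ 1)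
    (hn3 : 3 ≤ Real.sqrt ε * (Fintype.card V : ℝ))
    (hlog : 2 / (3 * Real.sqrt ε) * (2 + Real.log 3 + 2 * |Real.log (Real.sqrt ε)|)
      ≤ Real.log (Fintype.card V : ℝ)) :
    Real.log (NM V G (Real.sqrt ε)) ≤
      (1 + 3 * Real.sqrt ε) * ((Fintype.card V : ℝ) / 2) *
        Real.log (p * (Fintype.card V : ℝ)) := by
  classical
  set N : ℕ := Fintype.card V with hN
  set n : ℝ := (N : ℝ) with hnR
  set δ : ℝ := Real.sqrt ε with hδ
  have hδpos : 0 < δ := Real.sqrt_pos.mpr hε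
  have hδ1 : δ ≤ 1 := by
    rw [hδ]
    rw [show (1:ℝ) = Real.sqrt 1 by simp]
    exact Real.sqrt_le_sqrt (by nlinarith)
  have hn3' : (3:ℝ) ≤ n := by nlinarith
  have hnpos : (0:ℝ) < n := by linarith
  have hN3 : 3 ≤ N := by
    have h := hn3'
    rw [hnR] at h
    exact_mod_cast h
  have hN1 : 1 ≤ N := by omega
  have hpabs : δ < |p| := by
    rw [hδ, ← Real.sqrt_sq_eq_abs]
    exact Real.sqrt_lt_sqrt hε.le hεp
  have hp0 : p ≠ 0 := by
    intro h
    rw [h, abs_zero] at hpabs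
    linarith
  have hpabs1 : |p| ≤ 1 := by
    rw [← Real.sqrt_sq_eq_abs]
    rw [show (1:ℝ) = Real.sqrt 1 by simp]
    exact Real.sqrt_le_sqrt hp1
  set Lp : ℝ := |Real.log δ| with hLp
  have hLp0 : 0 ≤ Lp := abs_nonneg _
  have hlogp_le : Real.log p ≤ 0 := by
    rw [← Real.log_abs]
    exact Real.log_nonpos (abs_nonneg p) hpabs1
  have hlogp_ge : -Lp ≤ Real.log p := by
    rw [← Real.log_abs]
    calc -Lp ≤ Real.log δ := neg_abs_le _
      _ ≤ Real.log |p| := Real.log_le_log hδpos hpabs.le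
  have hlogn0 : 0 ≤ Real.log n := Real.log_nonneg (by linarith)
  have hlogn_le : Real.log n ≤ n := by
    have := Real.log_le_sub_one_of_pos hnpos
    linarith
  have hlogpn : Real.log (p * n) = Real.log p + Real.log n :=
    Real.log_mul hp0 (ne_of_gt hnpos)
  -- the case NM = 0
  rcases Nat.eq_zero_or_pos (NM V G δ) with h0 | hNMpos
  · rw [h0]
    simp only [Nat.cast_zero, Real.log_zero]
    have h1 : 0 ≤ Real.log (p * n) := by
      rw [← Real.log_abs, abs_mul, abs_of_pos hnpos]
      apply Real.log_nonneg
      nlinarith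
    positivity
  -- main case
  set K : ℕ := N / 2 with hK
  have hK1 : 1 ≤ K := by omega
  have hKn2 : 2 * K ≤ N := by omega
  have hKn1 : N ≤ 2 * K + 1 := by omega
  have hKR2 : (K:ℝ) ≤ n / 2 := by
    have := (Nat.cast_le (α := ℝ)).mpr hKn2
    push_cast at this
    rw [hnR]
    linarith
  have hKR3 : n / 3 ≤ (K:ℝ) := by
    have h := (Nat.cast_le (α := ℝ)).mpr hKn1
    push_cast at h
    rw [hnR]
    linarith
  have hKpos : (0:ℝ) < (K:ℝ) := by exact_mod_cast hK1
  have hlogK_ge : Real.log n - Real.log 3 ≤ Real.log (K:ℝ) := by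
    calc Real.log n - Real.log 3 = Real.log (n / 3) := (Real.log_div (ne_of_gt hnpos) (by norm_num)).symm
      _ ≤ Real.log (K:ℝ) := Real.log_le_log (by positivity) hKR3
  have hlogK1_le : Real.log ((K:ℝ) + 1) ≤ Real.log n := by
    apply Real.log_le_log (by positivity)
    have h1 : K + 1 ≤ N := by omega
    have := (Nat.cast_le (α := ℝ)).mpr h1
    push_cast at this
    rw [hnR]
    linarith
  have hfactK : (K:ℝ) * Real.log (K:ℝ) - (K:ℝ) ≤ Real.log (Nat.factorial K) := by
    have h1 := pow_le_factorial_mul_exp K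
    have h2 : Real.log ((K:ℝ)^K) ≤ Real.log ((Nat.factorial K : ℝ) * Real.exp K) :=
      Real.log_le_log (by positivity) h1
    rw [Real.log_pow, Real.log_mul (by positivity) (by positivity), Real.log_exp] at h2
    push_cast at h2
    linarith
  -- the counting bound, in log form
  have hcount := NM_count_upper_real G δ hN1
  rw [← hN, ← hK, ← hnR] at hcount
  have hNMr : (1:ℝ) ≤ (NM V G δ : ℝ) := by exact_mod_cast hNMpos
  have hstep1 : Real.log (NM V G δ) ≤
      Real.log ((K:ℝ) + 1) + (K:ℝ) * (2 * Real.log n) - Real.log (Nat.factorial K) := by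
    have hrhs : Real.log (NM V G δ) ≤
        Real.log (((K:ℝ) + 1) * ((n:ℝ)^2) ^ K / (Nat.factorial K)) := by
      apply Real.log_le_log (by linarith)
      exact_mod_cast hcount
    rw [Real.log_div (by positivity) (by positivity),
      Real.log_mul (by positivity) (by positivity), Real.log_pow] at hrhs
    have hsq : Real.log ((n:ℝ)^2) = 2 * Real.log n := by
      rw [Real.log_pow]
      push_cast
      ring
    rw [hsq] at hrhs
    linarith
  -- combine
  have hA : (K:ℝ) * (Real.log n - Real.log 3) ≤ (K:ℝ) * Real.log (K:ℝ) :=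
    mul_le_mul_of_nonneg_left hlogK_ge hKpos.le
  have hB : (K:ℝ) * Real.log n ≤ (n/2) * Real.log n :=
    mul_le_mul_of_nonneg_right hKR2 hlogn0
  have hlog3 : (0:ℝ) ≤ Real.log 3 := Real.log_nonneg (by norm_num)
  have hmid : Real.log (NM V G δ) ≤ n + (n/2) * Real.log n + (n/2) * (Real.log 3 + 1) := by
    have h1 : Real.log (NM V G δ) ≤
        Real.log n + (K:ℝ) * Real.log n + (K:ℝ) * (Real.log 3 + 1) := by
      have := hstep1
      nlinarith [hA, hlogK1_le, hfactK]
    have h2 : (K:ℝ) * (Real.log 3 + 1) ≤ (n/2) * (Real.log 3 + 1) :=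
      mul_le_mul_of_nonneg_right hKR2 (by linarith)
    linarith
  -- final arithmetic
  have hD : -((n/2) * Lp) ≤ (n/2) * Real.log p := by nlinarith [hlogp_ge, hnpos]
  have hE : -((3:ℝ)/2 * (n * Lp)) ≤ 3 * δ * (n/2) * Real.log p := by
    have hE1 : 3 * δ * (n/2) * (-Lp) ≤ 3 * δ * (n/2) * Real.log p :=
      mul_le_mul_of_nonneg_left hlogp_ge (by positivity)
    have hE2 : 3 * δ * (n/2) * Lp ≤ (3:ℝ)/2 * (n * Lp) := by
      nlinarith [mul_nonneg (mul_nonneg (sub_nonneg.mpr hδ1) hnpos.le) hLp0]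
    linarith
  have hF : (2 + Real.log 3 + 2 * Lp) * n ≤ 3 * δ / 2 * (n * Real.log n) := by
    have h1 : 2 / (3 * δ) * (2 + Real.log 3 + 2 * Lp) ≤ Real.log n := hlog
    have h2 : 0 < 3 * δ / 2 := by linarith
    rw [div_mul_eq_mul_div, div_le_iff₀ (by linarith)] at h1
    nlinarith [h1, hnpos]
  have hexp : (1 + 3 * δ) * (n / 2) * Real.log (p * n) =
      (n/2) * Real.log p + 3 * δ * (n/2) * Real.log p + (n/2) * Real.log n
        + 3 * δ / 2 * (n * Real.log n) := by
    rw [hlogpn]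
    ring
  rw [hexp]
  have hnLp : (n/2) * Lp + (3:ℝ)/2 * (n * Lp) ≤ 2 * (n * Lp) := by nlinarith [hLp0, hnpos]
  linarith [hmid, hD, hE, hF, hlogn_le, mul_nonneg hnpos.le hlog3]
lemma log_natCast_nonneg (k : ℕ) : 0 ≤ Real.log k := by
  rcases Nat.eq_zero_or_pos k with rfl | hk
  · simp
  · apply Real.log_nonneg
    exact_mod_cast hk

/-- in the relevant regime, quasirandomness forces `√ε < p` -/
lemma p_gt_sqrt (G : SimpleGraph V) [DecidableRel G.Adj] {ε p : ℝ}
    (hq : IsQuasirandom G ε p) (hε : 0 < ε) (hεp : ε < p ^ 2)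
    (h3δ : 3 * Real.sqrt ε < 1) (hN2 : 2 ≤ Fintype.card V) :
    Real.sqrt ε < p := by
  classical
  set N : ℕ := Fintype.card V with hN
  set n : ℝ := (N : ℝ) with hnR
  set δ : ℝ := Real.sqrt ε with hδ
  have hδpos : 0 < δ := Real.sqrt_pos.mpr hε
  have hε9 : ε < 1 / 9 := by nlinarith [Real.sq_sqrt hε.le]
  have hn2 : (2:ℝ) ≤ n := by rw [hnR]; exact_mod_cast hN2
  have hpabs : δ < |p| := by
    rw [hδ, ← Real.sqrt_sq_eq_abs]
    exact Real.sqrt_lt_sqrt hε.le hεp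
  -- construct two disjoint halves
  obtain ⟨X, -, hXcard⟩ := Finset.exists_subset_card_eq (s := (Finset.univ : Finset V)) (n := N / 2)
    (by rw [Finset.card_univ]; exact Nat.div_le_self _ _)
  set Y : Finset V := Finset.univ \ X with hY
  have hYcard : Y.card = N - N / 2 := by
    rw [hY, Finset.card_sdiff_of_subset (Finset.subset_univ _), Finset.card_univ, hXcard]
  have hXR : (N / 2 : ℕ) ≥ ε * n := by
    have h1 : (2 : ℕ) * (N / 2) + 1 ≥ N := by omega
    have h2 := (Nat.cast_le (α := ℝ)).mpr h1
    push_cast at h2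
    have : ε * n ≤ (n - 1) / 2 := by nlinarith
    rw [hnR] at this ⊢
    linarith
  have hεX : ε * n ≤ (X.card : ℝ) := by rw [hXcard]; exact hXR
  have hεY : ε * n ≤ (Y.card : ℝ) := by
    rw [hYcard]
    have h1 : N / 2 ≤ N - N / 2 := by omega
    have h2 := (Nat.cast_le (α := ℝ)).mpr h1
    exact le_trans hXR h2
  have happ := hq X Y Finset.disjoint_sdiff hεX hεY
  rw [abs_lt] at happ
  have hd0 : (0:ℝ) ≤ ((G.edgeDensity X Y : ℚ) : ℝ) := by
    exact_mod_cast G.edgeDensity_nonneg X Y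
  have hpge : -ε < p := by linarith [happ.1]
  have hεδ' : ε ≤ δ := by nlinarith [Real.sq_sqrt hε.le, Real.sqrt_nonneg ε]
  rcases le_or_gt p 0 with hple | hpgt
  · exfalso
    rw [abs_of_nonpos hple] at hpabs
    linarith
  · calc δ < |p| := hpabs
      _ = p := abs_of_pos hpgt
end Aux







/-- For all `0 < ε < p² ≤ 1` there is `n₀` such that every `(ε,p)`-quasirandom
graph `G` on `n > n₀` vertices satisfies
`(1-3√ε)·(n/2)·log(pn) ≤ log NM(G,√ε) ≤ (1+3√ε)·(n/2)·log(pn)`. -/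
theorem count_near_perfect_matchings_quasirandom :
    ∀ ε p : ℝ, 0 < ε → ε < p ^ 2 → p ^ 2 ≤ 1 →
    ∃ n₀ : ℕ, ∀ (V : Type) [Fintype V] [DecidableEq V]
      (G : SimpleGraph V) [DecidableRel G.Adj],
      Fintype.card V > n₀ →
      IsQuasirandom G ε p →
      (1 - 3 * Real.sqrt ε) * ((Fintype.card V : ℝ) / 2) *
          Real.log (p * (Fintype.card V : ℝ)) ≤ Real.log (NM V G (Real.sqrt ε)) ∧
        Real.log (NM V G (Real.sqrt ε)) ≤
          (1 + 3 * Real.sqrt ε) * ((Fintype.card V : ℝ) / 2) *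
            Real.log (p * (Fintype.card V : ℝ)) := by
  intro ε p hε hεp hp1
  have hδpos : 0 < Real.sqrt ε := Real.sqrt_pos.mpr hε
  set δ : ℝ := Real.sqrt ε with hδ
  set Rlow : ℝ :=
    Real.exp ((|Real.log (p - ε)| + 2 * |Real.log (δ / 3)| + Real.log 2) / δ) with hRlow
  set Rup : ℝ := Real.exp (2 / (3 * δ) * (2 + Real.log 3 + 2 * |Real.log δ|)) with hRup
  set R : ℝ := max (max Rlow Rup) (3 / δ) with hR
  refine ⟨⌈R⌉₊ + 3, ?_⟩
  intro V _ _ G _ hcard hq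
  have hN3 : 3 ≤ Fintype.card V := by omega
  have hn3R : (3:ℝ) ≤ (Fintype.card V : ℝ) := by exact_mod_cast hN3
  have hnpos : (0:ℝ) < (Fintype.card V : ℝ) := by linarith
  have hRn : R ≤ (Fintype.card V : ℝ) := by
    have h1 : R ≤ (⌈R⌉₊ : ℝ) := Nat.le_ceil R
    have h2 : (⌈R⌉₊ : ℕ) ≤ Fintype.card V := by omega
    have h3 := (Nat.cast_le (α := ℝ)).mpr h2
    linarith
  have hn3 : 3 ≤ δ * (Fintype.card V : ℝ) := by
    have h1 : 3 / δ ≤ (Fintype.card V : ℝ) := le_trans (le_max_right _ _) hRn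
    rw [div_le_iff₀ hδpos] at h1
    nlinarith
  have hlogup : 2 / (3 * δ) * (2 + Real.log 3 + 2 * |Real.log δ|)
      ≤ Real.log (Fintype.card V : ℝ) := by
    have h := le_trans (le_trans (le_max_right Rlow Rup) (le_max_left _ _)) hRn
    rw [hRup] at h
    exact (Real.le_log_iff_exp_le hnpos).mpr h
  have hloglow : (|Real.log (p - ε)| + 2 * |Real.log (δ / 3)| + Real.log 2) / δ
      ≤ Real.log (Fintype.card V : ℝ) := by
    have h := le_trans (le_trans (le_max_left Rlow Rup) (le_max_left _ _)) hRn
    rw [hRlow] at h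
    exact (Real.le_log_iff_exp_le hnpos).mpr h
  have hpabs : δ < |p| := by
    rw [hδ, ← Real.sqrt_sq_eq_abs]
    exact Real.sqrt_lt_sqrt hε.le hεp
  constructor
  · -- lower bound
    by_cases hneg : (1 - 3 * δ) * ((Fintype.card V : ℝ) / 2) *
        Real.log (p * (Fintype.card V : ℝ)) ≤ 0
    · exact le_trans hneg (log_natCast_nonneg _)
    · push_neg at hneg
      have hlogpn0 : 0 ≤ Real.log (p * (Fintype.card V : ℝ)) := by
        rw [← Real.log_abs, abs_mul, abs_of_pos hnpos]
        apply Real.log_nonneg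
        have h1 : δ * (Fintype.card V : ℝ) ≤ |p| * (Fintype.card V : ℝ) :=
          mul_le_mul_of_nonneg_right hpabs.le hnpos.le
        linarith
      have h3δ : 3 * δ < 1 := by
        by_contra hcon
        push_neg at hcon
        have h1 : 0 ≤ ((Fintype.card V : ℝ) / 2) *
            Real.log (p * (Fintype.card V : ℝ)) := by positivity
        nlinarith
      have hδp : δ < p := p_gt_sqrt G hq hε hεp h3δ (by omega)
      exact lower_bound_main G hq hε hp1 h3δ hδp hn3 hloglow
  · exact upper_bound_main G hε hεp hp1 hn3 hlogup
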